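/- Let V' and V'' be real vector spaces with nondegenerate symmetric bilinear forms b', b'' of signatures (u,u) and (v,w) respectively, with orthogonal decompositions V' = V'₁ ⊕ V'₂ (positive/negative definite, each of dimension u) and V'' = V''₁ ⊕ V''₂ (of dimensions v, w). Then in V'⊗V'', the subspace (V'₁⊗V''₁) ⊕ (V'₂⊗V''₂) is positive definite for b'⊗b'', the subspace (V'₁⊗V''₂) ⊕ (V'₂⊗V''₁) is negative definite, the two are orthogonal, and both have dimension u(v+w). -/

import Mathlib

open TensorProduct

/-- The image in `V ⊗ W` of a pair of subspaces, i.e. the span of the elementary tensors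
`x ⊗ y` with `x ∈ p` and `y ∈ q`. -/
def tensorSub {V W : Type*} [AddCommGroup V] [Module ℝ V] [AddCommGroup W] [Module ℝ W]
    (p : Submodule ℝ V) (q : Submodule ℝ W) : Submodule ℝ (V ⊗[ℝ] W) :=
  Submodule.span ℝ {z | ∃ x ∈ p, ∃ y ∈ q, z = x ⊗ₜ[ℝ] y}

lemma tensorSub_eq_span {V W : Type*} [AddCommGroup V] [Module ℝ V] [AddCommGroup W]
    [Module ℝ W] {p : Submodule ℝ V} {q : Submodule ℝ W} {ι κ : Type*} (e : ι → V) (f : κ → W)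
    (he : ∀ i, e i ∈ p) (hf : ∀ j, f j ∈ q)
    (hpe : p ≤ Submodule.span ℝ (Set.range e)) (hqf : q ≤ Submodule.span ℝ (Set.range f)) :
    tensorSub p q = Submodule.span ℝ (Set.range fun ij : ι × κ => e ij.1 ⊗ₜ[ℝ] f ij.2) := by
  apply le_antisymm
  · rw [tensorSub, Submodule.span_le]
    rintro z ⟨x, hx, y, hy, rfl⟩
    have hx' := hpe hx
    have hy' := hqf hy
    clear hx hy
    induction hx' using Submodule.span_induction with
    | mem x hxm =>
        induction hy' using Submodule.span_induction with
        | mem y hym =>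
            obtain ⟨i, rfl⟩ := hxm; obtain ⟨j, rfl⟩ := hym
            exact Submodule.subset_span ⟨(i, j), rfl⟩
        | zero => simp
        | add y₁ y₂ _ _ h₁ h₂ => rw [tmul_add]; exact Submodule.add_mem _ h₁ h₂
        | smul a y _ h => rw [tmul_smul]; exact Submodule.smul_mem _ a h
    | zero => simp
    | add x₁ x₂ _ _ h₁ h₂ => rw [add_tmul]; exact Submodule.add_mem _ h₁ h₂
    | smul a x _ h => rw [← smul_tmul']; exact Submodule.smul_mem _ a h
  · rw [Submodule.span_le]
    rintro z ⟨⟨i, j⟩, rfl⟩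
    exact Submodule.subset_span ⟨e i, he i, f j, hf j, rfl⟩

lemma submodule_le_span_range_coe {V : Type*} [AddCommGroup V] [Module ℝ V] {p : Submodule ℝ V}
    {ι : Type*} (b : Module.Basis ι ℝ p) :
    p ≤ Submodule.span ℝ (Set.range fun i => (b i : V)) := by
  intro x hx
  have h1 : (⟨x, hx⟩ : p) ∈ Submodule.span ℝ (Set.range b) := by rw [b.span_eq]; trivial
  have h2 := Submodule.mem_map_of_mem (f := p.subtype) h1
  rwa [Submodule.map_span, ← Set.range_comp] at h2

lemma bilin_sum_sum {M : Type*} [AddCommGroup M] [Module ℝ M] (B : LinearMap.BilinForm ℝ M)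
    {ι κ : Type*} [Fintype ι] [Fintype κ] (g : ι → M) (h : κ → M) (c : ι → ℝ) (c' : κ → ℝ) :
    B (∑ i, c i • g i) (∑ j, c' j • h j) = ∑ i, ∑ j, c i * c' j * B (g i) (h j) := by
  simp only [map_sum, LinearMap.sum_apply, map_smul, LinearMap.smul_apply, smul_eq_mul]
  rw [Finset.sum_comm]
  refine Finset.sum_congr rfl fun j _ => ?_
  rw [Finset.mul_sum]
  exact Finset.sum_congr rfl fun i _ => by ring

lemma bilin_diag {M : Type*} [AddCommGroup M] [Module ℝ M] (B : LinearMap.BilinForm ℝ M)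
    {ι : Type*} [Fintype ι] (g : ι → M) (horth : ∀ i j, i ≠ j → B (g i) (g j) = 0)
    (c c' : ι → ℝ) :
    B (∑ i, c i • g i) (∑ j, c' j • g j) = ∑ i, c i * c' i * B (g i) (g i) := by
  rw [bilin_sum_sum]
  refine Finset.sum_congr rfl fun i _ => ?_
  rw [Fintype.sum_eq_single i fun j hj => by rw [horth i j (Ne.symm hj)]; ring]

set_option maxHeartbeats 1000000 in
/-- Let `b'` have signature `(u,u)` with orthogonal positive/negative definite parts
`P', N'` of dimension `u` each, and `b''` signature `(v,w)` with parts `P'', N''`.  Then in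
`V' ⊗ V''` the subspace `(P'⊗P'') ⊕ (N'⊗N'')` is positive definite for `b'⊗b''`, the
subspace `(P'⊗N'') ⊕ (N'⊗P'')` is negative definite, the two are orthogonal, and both
have dimension `u(v+w)`. -/
theorem tensor_split_decomposition {V W : Type*}
    [AddCommGroup V] [Module ℝ V] [AddCommGroup W] [Module ℝ W]
    [FiniteDimensional ℝ V] [FiniteDimensional ℝ W]
    (b' : LinearMap.BilinForm ℝ V) (b'' : LinearMap.BilinForm ℝ W)
    (hs' : ∀ x y, b' x y = b' y x) (hs'' : ∀ x y, b'' x y = b'' y x)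
    (hn' : b'.Nondegenerate) (hn'' : b''.Nondegenerate)
    (P' N' : Submodule ℝ V) (P'' N'' : Submodule ℝ W)
    (hc' : IsCompl P' N') (hc'' : IsCompl P'' N'')
    (horth' : ∀ x ∈ P', ∀ y ∈ N', b' x y = 0)
    (horth'' : ∀ x ∈ P'', ∀ y ∈ N'', b'' x y = 0)
    (hpos' : ∀ x ∈ P', x ≠ 0 → 0 < b' x x) (hneg' : ∀ x ∈ N', x ≠ 0 → b' x x < 0)
    (hpos'' : ∀ x ∈ P'', x ≠ 0 → 0 < b'' x x) (hneg'' : ∀ x ∈ N'', x ≠ 0 → b'' x x < 0)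
    (u v w : ℕ)
    (hdP' : Module.finrank ℝ P' = u) (hdN' : Module.finrank ℝ N' = u)
    (hdP'' : Module.finrank ℝ P'' = v) (hdN'' : Module.finrank ℝ N'' = w) :
    (∀ z ∈ tensorSub P' P'' ⊔ tensorSub N' N'', z ≠ 0 → 0 < (b'.tmul b'') z z) ∧
      (∀ z ∈ tensorSub P' N'' ⊔ tensorSub N' P'', z ≠ 0 → (b'.tmul b'') z z < 0) ∧
      (∀ z ∈ tensorSub P' P'' ⊔ tensorSub N' N'',
        ∀ z' ∈ tensorSub P' N'' ⊔ tensorSub N' P'', (b'.tmul b'') z z' = 0) ∧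
      Module.finrank ℝ ↥(tensorSub P' P'' ⊔ tensorSub N' N'') = u * (v + w) ∧
      Module.finrank ℝ ↥(tensorSub P' N'' ⊔ tensorSub N' P'') = u * (v + w) := by
  classical
  -- orthogonal bases of the four pieces
  obtain ⟨bP', hbP'⟩ := LinearMap.BilinForm.exists_orthogonal_basis
    (B := b'.restrict P') (LinearMap.isSymm_def.mpr fun x y => hs' x y)
  obtain ⟨bN', hbN'⟩ := LinearMap.BilinForm.exists_orthogonal_basis
    (B := b'.restrict N') (LinearMap.isSymm_def.mpr fun x y => hs' x y)
  obtain ⟨bP'', hbP''⟩ := LinearMap.BilinForm.exists_orthogonal_basis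
    (B := b''.restrict P'') (LinearMap.isSymm_def.mpr fun x y => hs'' x y)
  obtain ⟨bN'', hbN''⟩ := LinearMap.BilinForm.exists_orthogonal_basis
    (B := b''.restrict N'') (LinearMap.isSymm_def.mpr fun x y => hs'' x y)
  set b₁ : Module.Basis (Fin u) ℝ P' := bP'.reindex (finCongr hdP') with hb₁
  set b₂ : Module.Basis (Fin u) ℝ N' := bN'.reindex (finCongr hdN') with hb₂
  set b₃ : Module.Basis (Fin v) ℝ P'' := bP''.reindex (finCongr hdP'') with hb₃
  set b₄ : Module.Basis (Fin w) ℝ N'' := bN''.reindex (finCongr hdN'') with hb₄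
  set e₁ : Fin u → V := fun i => (b₁ i : V) with he₁def
  set e₂ : Fin u → V := fun i => (b₂ i : V) with he₂def
  set f₁ : Fin v → W := fun i => (b₃ i : W) with hf₁def
  set f₂ : Fin w → W := fun i => (b₄ i : W) with hf₂def
  have he₁ : ∀ i, e₁ i ∈ P' := fun i => (b₁ i).2
  have he₂ : ∀ i, e₂ i ∈ N' := fun i => (b₂ i).2
  have hf₁ : ∀ i, f₁ i ∈ P'' := fun i => (b₃ i).2
  have hf₂ : ∀ i, f₂ i ∈ N'' := fun i => (b₄ i).2
  have hoe₁ : ∀ i j, i ≠ j → b' (e₁ i) (e₁ j) = 0 := by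
    intro i j hij
    have h := hbP' ((finCongr hdP').symm.injective.ne hij)
    simpa [he₁def, hb₁, Module.Basis.reindex_apply, LinearMap.IsOrtho] using h
  have hoe₂ : ∀ i j, i ≠ j → b' (e₂ i) (e₂ j) = 0 := by
    intro i j hij
    have h := hbN' ((finCongr hdN').symm.injective.ne hij)
    simpa [he₂def, hb₂, Module.Basis.reindex_apply, LinearMap.IsOrtho] using h
  have hof₁ : ∀ i j, i ≠ j → b'' (f₁ i) (f₁ j) = 0 := by
    intro i j hij
    have h := hbP'' ((finCongr hdP'').symm.injective.ne hij)
    simpa [hf₁def, hb₃, Module.Basis.reindex_apply, LinearMap.IsOrtho] using h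
  have hof₂ : ∀ i j, i ≠ j → b'' (f₂ i) (f₂ j) = 0 := by
    intro i j hij
    have h := hbN'' ((finCongr hdN'').symm.injective.ne hij)
    simpa [hf₂def, hb₄, Module.Basis.reindex_apply, LinearMap.IsOrtho] using h
  have hde₁ : ∀ i, 0 < b' (e₁ i) (e₁ i) := fun i =>
    hpos' _ (he₁ i) (by simpa [he₁def, Submodule.coe_eq_zero] using b₁.ne_zero i)
  have hde₂ : ∀ i, b' (e₂ i) (e₂ i) < 0 := fun i =>
    hneg' _ (he₂ i) (by simpa [he₂def, Submodule.coe_eq_zero] using b₂.ne_zero i)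
  have hdf₁ : ∀ i, 0 < b'' (f₁ i) (f₁ i) := fun i =>
    hpos'' _ (hf₁ i) (by simpa [hf₁def, Submodule.coe_eq_zero] using b₃.ne_zero i)
  have hdf₂ : ∀ i, b'' (f₂ i) (f₂ i) < 0 := fun i =>
    hneg'' _ (hf₂ i) (by simpa [hf₂def, Submodule.coe_eq_zero] using b₄.ne_zero i)
  -- full bases of V and W
  set bE : Module.Basis (Fin u ⊕ Fin u) ℝ V :=
    (b₁.prod b₂).map (Submodule.prodEquivOfIsCompl P' N' hc') with hbEdef
  set bF : Module.Basis (Fin v ⊕ Fin w) ℝ W :=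
    (b₃.prod b₄).map (Submodule.prodEquivOfIsCompl P'' N'' hc'') with hbFdef
  have hbE : ∀ s, bE s = Sum.elim e₁ e₂ s := by
    have h0 : ∀ i : Fin u, ((b₁.prod b₂) (Sum.inl i)) = (b₁ i, 0) := fun i =>
      Prod.ext (Module.Basis.prod_apply_inl_fst _ _ _) (Module.Basis.prod_apply_inl_snd _ _ _)
    have h0' : ∀ i : Fin u, ((b₁.prod b₂) (Sum.inr i)) = (0, b₂ i) := fun i =>
      Prod.ext (Module.Basis.prod_apply_inr_fst _ _ _) (Module.Basis.prod_apply_inr_snd _ _ _)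
    rintro (i | i)
    · rw [hbEdef, Module.Basis.map_apply, h0, Submodule.coe_prodEquivOfIsCompl']
      simp [he₁def]
    · rw [hbEdef, Module.Basis.map_apply, h0', Submodule.coe_prodEquivOfIsCompl']
      simp [he₂def]
  have hbF : ∀ s, bF s = Sum.elim f₁ f₂ s := by
    have h0 : ∀ i : Fin v, ((b₃.prod b₄) (Sum.inl i)) = (b₃ i, 0) := fun i =>
      Prod.ext (Module.Basis.prod_apply_inl_fst _ _ _) (Module.Basis.prod_apply_inl_snd _ _ _)
    have h0' : ∀ i : Fin w, ((b₃.prod b₄) (Sum.inr i)) = (0, b₄ i) := fun i =>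
      Prod.ext (Module.Basis.prod_apply_inr_fst _ _ _) (Module.Basis.prod_apply_inr_snd _ _ _)
    rintro (i | i)
    · rw [hbFdef, Module.Basis.map_apply, h0, Submodule.coe_prodEquivOfIsCompl']
      simp [hf₁def]
    · rw [hbFdef, Module.Basis.map_apply, h0', Submodule.coe_prodEquivOfIsCompl']
      simp [hf₂def]
  have hoE : ∀ s t, s ≠ t → b' (Sum.elim e₁ e₂ s) (Sum.elim e₁ e₂ t) = 0 := by
    rintro (i | i) (j | j) hst
    · exact hoe₁ i j (by simpa using hst)
    · exact horth' _ (he₁ i) _ (he₂ j)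
    · rw [hs']; exact horth' _ (he₁ j) _ (he₂ i)
    · exact hoe₂ i j (by simpa using hst)
  have hoF : ∀ s t, s ≠ t → b'' (Sum.elim f₁ f₂ s) (Sum.elim f₁ f₂ t) = 0 := by
    rintro (i | i) (j | j) hst
    · exact hof₁ i j (by simpa using hst)
    · exact horth'' _ (hf₁ i) _ (hf₂ j)
    · rw [hs'']; exact horth'' _ (hf₁ j) _ (hf₂ i)
    · exact hof₂ i j (by simpa using hst)
  -- basis of the tensor product
  set bT : Module.Basis ((Fin u ⊕ Fin u) × (Fin v ⊕ Fin w)) ℝ (V ⊗[ℝ] W) :=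
    bE.tensorProduct bF with hbTdef
  have hbT : ∀ s t, bT (s, t) = Sum.elim e₁ e₂ s ⊗ₜ[ℝ] Sum.elim f₁ f₂ t := by
    intro s t
    rw [hbTdef, Module.Basis.tensorProduct_apply, hbE, hbF]
  have hoT : ∀ a b : (Fin u ⊕ Fin u) × (Fin v ⊕ Fin w), a ≠ b →
      (b'.tmul b'') (bT a) (bT b) = 0 := by
    rintro ⟨s, t⟩ ⟨s', t'⟩ hne
    rw [hbT, hbT, LinearMap.BilinForm.tensorDistrib_tmul]
    rcases eq_or_ne s s' with rfl | hss
    · have ht : t ≠ t' := fun h => hne (by rw [h])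
      rw [hoF t t' ht]; simp
    · rw [hoE s s' hss]; simp
  -- index families for the positive and negative parts
  set σp : (Fin u × Fin v) ⊕ (Fin u × Fin w) → (Fin u ⊕ Fin u) × (Fin v ⊕ Fin w) :=
    Sum.elim (fun ij => (Sum.inl ij.1, Sum.inl ij.2)) (fun ij => (Sum.inr ij.1, Sum.inr ij.2))
    with hσpdef
  set σn : (Fin u × Fin w) ⊕ (Fin u × Fin v) → (Fin u ⊕ Fin u) × (Fin v ⊕ Fin w) :=
    Sum.elim (fun ij => (Sum.inl ij.1, Sum.inr ij.2)) (fun ij => (Sum.inr ij.1, Sum.inl ij.2))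
    with hσndef
  have hσpinj : Function.Injective σp := by
    rintro (⟨i, j⟩ | ⟨i, j⟩) (⟨i', j'⟩ | ⟨i', j'⟩) h <;>
      simp only [hσpdef, Sum.elim_inl, Sum.elim_inr, Prod.mk.injEq, Sum.inl.injEq,
        Sum.inr.injEq, reduceCtorEq, false_and, and_false] at h <;>
      first
      | (obtain ⟨rfl, rfl⟩ := h; rfl)
      | exact h.elim
  have hσninj : Function.Injective σn := by
    rintro (⟨i, j⟩ | ⟨i, j⟩) (⟨i', j'⟩ | ⟨i', j'⟩) h <;>
      simp only [hσndef, Sum.elim_inl, Sum.elim_inr, Prod.mk.injEq, Sum.inl.injEq,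
        Sum.inr.injEq, reduceCtorEq, false_and, and_false] at h <;>
      first
      | (obtain ⟨rfl, rfl⟩ := h; rfl)
      | exact h.elim
  have hσpn : ∀ i j, σp i ≠ σn j := by
    rintro (⟨i, j⟩ | ⟨i, j⟩) (⟨i', j'⟩ | ⟨i', j'⟩) h <;>
      simp only [hσpdef, hσndef, Sum.elim_inl, Sum.elim_inr, Prod.mk.injEq, Sum.inl.injEq,
        Sum.inr.injEq, reduceCtorEq, false_and, and_false] at h <;>
      first
      | exact h.elim
      | exact absurd h.2 (by simp)
      | exact absurd h.1 (by simp)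
  set gp := bT ∘ σp with hgpdef
  set gn := bT ∘ σn with hgndef
  have hgppos : ∀ i, 0 < (b'.tmul b'') (gp i) (gp i) := by
    rintro (⟨i, j⟩ | ⟨i, j⟩) <;>
      · rw [hgpdef]
        simp only [Function.comp_apply, hσpdef, Sum.elim_inl, Sum.elim_inr]
        rw [hbT, LinearMap.BilinForm.tensorDistrib_tmul]
        simp only [Sum.elim_inl, Sum.elim_inr, smul_eq_mul]
        first
        | exact mul_pos (hdf₁ j) (hde₁ i)
        | exact mul_pos_of_neg_of_neg (hdf₂ j) (hde₂ i)
  have hgnneg : ∀ i, (b'.tmul b'') (gn i) (gn i) < 0 := by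
    rintro (⟨i, j⟩ | ⟨i, j⟩) <;>
      · rw [hgndef]
        simp only [Function.comp_apply, hσndef, Sum.elim_inl, Sum.elim_inr]
        rw [hbT, LinearMap.BilinForm.tensorDistrib_tmul]
        simp only [Sum.elim_inl, Sum.elim_inr, smul_eq_mul]
        first
        | exact mul_neg_of_neg_of_pos (hdf₂ j) (hde₁ i)
        | exact mul_neg_of_pos_of_neg (hdf₁ j) (hde₂ i)
  -- identification of the subspaces with spans
  have hle₁ : P' ≤ Submodule.span ℝ (Set.range e₁) := submodule_le_span_range_coe b₁
  have hle₂ : N' ≤ Submodule.span ℝ (Set.range e₂) := submodule_le_span_range_coe b₂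
  have hlf₁ : P'' ≤ Submodule.span ℝ (Set.range f₁) := submodule_le_span_range_coe b₃
  have hlf₂ : N'' ≤ Submodule.span ℝ (Set.range f₂) := submodule_le_span_range_coe b₄
  have hgp : gp = Sum.elim (fun ij : Fin u × Fin v => e₁ ij.1 ⊗ₜ[ℝ] f₁ ij.2)
      (fun ij : Fin u × Fin w => e₂ ij.1 ⊗ₜ[ℝ] f₂ ij.2) := by
    funext s
    rcases s with ⟨i, j⟩ | ⟨i, j⟩ <;>
      simp [hgpdef, hσpdef, hbT]
  have hgn : gn = Sum.elim (fun ij : Fin u × Fin w => e₁ ij.1 ⊗ₜ[ℝ] f₂ ij.2)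
      (fun ij : Fin u × Fin v => e₂ ij.1 ⊗ₜ[ℝ] f₁ ij.2) := by
    funext s
    rcases s with ⟨i, j⟩ | ⟨i, j⟩ <;>
      simp [hgndef, hσndef, hbT]
  have hsupP : tensorSub P' P'' ⊔ tensorSub N' N'' = Submodule.span ℝ (Set.range gp) := by
    rw [tensorSub_eq_span e₁ f₁ he₁ hf₁ hle₁ hlf₁, tensorSub_eq_span e₂ f₂ he₂ hf₂ hle₂ hlf₂,
      ← Submodule.span_union, hgp, Set.Sum.elim_range]
  have hsupN : tensorSub P' N'' ⊔ tensorSub N' P'' = Submodule.span ℝ (Set.range gn) := by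
    rw [tensorSub_eq_span e₁ f₂ he₁ hf₂ hle₁ hlf₂, tensorSub_eq_span e₂ f₁ he₂ hf₁ hle₂ hlf₁,
      ← Submodule.span_union, hgn, Set.Sum.elim_range]
  have hgpli : LinearIndependent ℝ gp := bT.linearIndependent.comp σp hσpinj
  have hgnli : LinearIndependent ℝ gn := bT.linearIndependent.comp σn hσninj
  have hogp : ∀ i j, i ≠ j → (b'.tmul b'') (gp i) (gp j) = 0 := fun i j hij =>
    hoT _ _ (hσpinj.ne hij)
  have hogn : ∀ i j, i ≠ j → (b'.tmul b'') (gn i) (gn j) = 0 := fun i j hij =>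
    hoT _ _ (hσninj.ne hij)
  refine ⟨?_, ?_, ?_, ?_, ?_⟩
  · -- positivity
    intro z hz hz0
    rw [hsupP] at hz
    obtain ⟨c, rfl⟩ := (Submodule.mem_span_range_iff_exists_fun ℝ).mp hz
    rw [bilin_diag _ _ hogp]
    have hcne : ∃ i, c i ≠ 0 := by
      by_contra h
      push_neg at h
      exact hz0 (Finset.sum_eq_zero fun i _ => by rw [h i, zero_smul])
    obtain ⟨i₀, hi₀⟩ := hcne
    refine Finset.sum_pos' (fun i _ => mul_nonneg (mul_self_nonneg _) (hgppos i).le)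
      ⟨i₀, Finset.mem_univ _, mul_pos (mul_self_pos.mpr hi₀) (hgppos i₀)⟩
  · -- negativity
    intro z hz hz0
    rw [hsupN] at hz
    obtain ⟨c, rfl⟩ := (Submodule.mem_span_range_iff_exists_fun ℝ).mp hz
    rw [bilin_diag _ _ hogn]
    have hcne : ∃ i, c i ≠ 0 := by
      by_contra h
      push_neg at h
      exact hz0 (Finset.sum_eq_zero fun i _ => by rw [h i, zero_smul])
    obtain ⟨i₀, hi₀⟩ := hcne
    have hpos : 0 < ∑ i, -(c i * c i * (b'.tmul b'') (gn i) (gn i)) :=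
      Finset.sum_pos' (fun i _ => by nlinarith [mul_self_nonneg (c i), hgnneg i])
        ⟨i₀, Finset.mem_univ _, by nlinarith [mul_self_pos.mpr hi₀, hgnneg i₀]⟩
    rw [Finset.sum_neg_distrib] at hpos
    linarith
  · -- orthogonality
    intro z hz z' hz'
    rw [hsupP] at hz
    rw [hsupN] at hz'
    obtain ⟨c, rfl⟩ := (Submodule.mem_span_range_iff_exists_fun ℝ).mp hz
    obtain ⟨c', rfl⟩ := (Submodule.mem_span_range_iff_exists_fun ℝ).mp hz'
    rw [bilin_sum_sum]
    refine Finset.sum_eq_zero fun i _ => Finset.sum_eq_zero fun j _ => ?_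
    exact mul_eq_zero_of_right _ (hoT _ _ (hσpn i j))
  · rw [hsupP, finrank_span_eq_card hgpli]
    simp [Fintype.card_sum, Nat.mul_add]
  · rw [hsupN, finrank_span_eq_card hgnli]
    simp [Fintype.card_sum, Nat.mul_add]
    ring
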